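/- arXiv:1201.1483 — 8 statements merged into one kernel-verified Lean document; each statement's English description precedes it below -/
import Mathlib

section
/- Let (R_t) be a dynamic risk measure with acceptance sets A_t, and assume M_t ⊆ M_{t+s}. If A_t ⊆ A_{t+s} + A_{t,t+s}^{M_{t+s}}, then for all X ∈ L^p_d(F_T): R_t(X) ⊆ ∪_{Z ∈ R_{t+s}(X)} R_t(−Z). Conversely, if R_t(X) ⊆ ∪_{Z ∈ R_{t+s}(X)} R_t(−Z) for all X, then A_t ⊆ A_{t+s} + A_{t,t+s}^{M_{t+s}} (no inclusion of eligible sets needed for this direction). -/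
open MeasureTheory Set Pointwise ENNReal
noncomputable section

/-- Portfolio vectors in `ℝ^d` (with the sup norm coming from the Pi instance). -/
abbrev Ed (d : ℕ) := Fin d → ℝ

variable {Ω : Type*} {m0 : MeasurableSpace Ω}

/-- The a.s. componentwise-nonnegative cone `L^p_d(F_T)_+`. -/
def LposT (μ : Measure Ω) (p : ℝ≥0∞) (d : ℕ) : Set (Lp (Ed d) p μ) :=
  {X | ∀ᵐ ω ∂μ, 0 ≤ X ω}

/-- A conditional risk measure with eligible portfolios `M`:
it maps into `P(M;M_+)`, is `M`-translative, `L^p_+`-monotone and finite at zero. -/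
def IsCondRM (μ : Measure Ω) (p : ℝ≥0∞) (d : ℕ)
    (M : Set (Lp (Ed d) p μ)) (R : Lp (Ed d) p μ → Set (Lp (Ed d) p μ)) : Prop :=
  (∀ X, R X ⊆ M) ∧
  (∀ X, R X + (M ∩ LposT μ p d) = R X) ∧
  (∀ X, ∀ m ∈ M, R (X + m) = (fun u => u - m) '' R X) ∧
  (∀ X Y, Y - X ∈ LposT μ p d → R X ⊆ R Y) ∧
  (R 0).Nonempty ∧ R 0 ≠ M

/-- with `M_t ⊆ M_{t+s}`, `A_t ⊆ A_{t+s} + A_{t,t+s}^{M_{t+s}}` implies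
`R_t(X) ⊆ ⋃_{Z ∈ R_{t+s}(X)} R_t(−Z)`; conversely (without any inclusion of eligible
sets), the latter implies the former. -/
theorem acceptance_subset_iff_risk_subset_union
    (μ : Measure Ω) [IsProbabilityMeasure μ] (p : ℝ≥0∞) [Fact (1 ≤ p)] (d : ℕ)
    (T : ℕ) (F : ℕ → MeasurableSpace Ω) (hFle : ∀ t, F t ≤ m0) (hFmono : Monotone F)
    (M : ℕ → Set (Lp (Ed d) p μ))
    (hMF : ∀ t ≤ T, M t ⊆ {X | AEStronglyMeasurable[F t] X μ})
    (R : ℕ → Lp (Ed d) p μ → Set (Lp (Ed d) p μ))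
    (hR : ∀ t ≤ T, IsCondRM μ p d (M t) (R t))
    (t s : ℕ) (hts : t + s ≤ T) :
    ((M t ⊆ M (t + s)) →
      {Z | 0 ∈ R t Z} ⊆ {Z | 0 ∈ R (t + s) Z} + ({Z | 0 ∈ R t Z} ∩ M (t + s)) →
      ∀ X : Lp (Ed d) p μ, R t X ⊆ ⋃ Z ∈ R (t + s) X, R t (-Z)) ∧
    ((∀ X : Lp (Ed d) p μ, R t X ⊆ ⋃ Z ∈ R (t + s) X, R t (-Z)) →
      {Z | 0 ∈ R t Z} ⊆ {Z | 0 ∈ R (t + s) Z} + ({Z | 0 ∈ R t Z} ∩ M (t + s))) := by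
  obtain ⟨hRtM, -, hRtTr, -, -, -⟩ := hR t (le_trans (Nat.le_add_right t s) hts)
  obtain ⟨hRsM, -, hRsTr, -, -, -⟩ := hR (t + s) hts
  constructor
  · intro hMsub hAsub X U hU
    have hUM : U ∈ M t := hRtM X hU
    have hXU : (0 : Lp (Ed d) p μ) ∈ R t (X + U) := by
      rw [hRtTr X U hUM]
      exact ⟨U, hU, sub_self U⟩
    obtain ⟨Y, hY, W, hW, hYW⟩ := hAsub hXU
    obtain ⟨hW0, hWM⟩ := hW
    have hnegW : -W ∈ R (t + s) (X + U) := by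
      rw [← hYW, hRsTr Y W hWM]
      exact ⟨0, hY, by simp⟩
    rw [hRsTr X U (hMsub hUM)] at hnegW
    obtain ⟨Z, hZ, hZe⟩ := hnegW
    refine Set.mem_biUnion hZ ?_
    have hWU : -Z = W - U := by
      have h1 : U - Z = W := by
        rw [← neg_neg W, ← hZe, neg_sub]
      rw [← h1]; abel
    rw [hWU]
    have hkey := hRtTr (W - U) U hUM
    rw [sub_add_cancel] at hkey
    have hW0' : (0 : Lp (Ed d) p μ) ∈ R t W := hW0
    rw [hkey] at hW0'
    obtain ⟨v, hv, hve⟩ := hW0'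
    have hvU : v = U := by
      have : v - U = 0 := hve
      rwa [sub_eq_zero] at this
    rwa [hvU] at hv
  · intro h X hX
    have h1 := h X hX
    simp only [Set.mem_iUnion] at h1
    obtain ⟨Z, hZmem, hZ0⟩ := h1
    have h2 := h (-Z) hZ0
    simp only [Set.mem_iUnion] at h2
    obtain ⟨Z', hZ'mem, -⟩ := h2
    have hZM : Z ∈ M (t + s) := hRsM X hZmem
    have hZ'M : Z' ∈ M (t + s) := hRsM (-Z) hZ'mem
    have hZZ' : Z' - Z ∈ R (t + s) 0 := by
      have hre := hRsTr (-Z) Z hZM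
      rw [neg_add_cancel] at hre
      rw [hre]
      exact ⟨Z', hZ'mem, rfl⟩
    have hnZ : -Z ∈ R (t + s) Z' := by
      have hre := hRsTr 0 Z' hZ'M
      rw [zero_add] at hre
      rw [hre]
      exact ⟨Z' - Z, hZZ', by abel⟩
    have hnegZM : -Z ∈ M (t + s) := hRsM Z' hnZ
    rw [Set.mem_add]
    refine ⟨X + Z, ?_, -Z, ⟨hZ0, hnegZM⟩, by abel⟩
    show (0 : Lp (Ed d) p μ) ∈ R (t + s) (X + Z)
    rw [hRsTr X Z hZM]
    exact ⟨Z, hZmem, sub_self Z⟩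
end
end

section
/- Let (R_t) be a dynamic risk measure with acceptance sets A_t, and assume M_t ⊆ M_{t+s}. If A_t ⊇ A_{t+s} + A_{t,t+s}^{M_{t+s}}, then for all X ∈ L^p_d(F_T): R_t(X) ⊇ ∪_{Z ∈ R_{t+s}(X)} R_t(−Z). Conversely, if R_t(X) ⊇ ∪_{Z ∈ R_{t+s}(X)} R_t(−Z) for all X, then A_t ⊇ A_{t+s} + A_{t,t+s}^{M_{t+s}} (no inclusion of eligible sets needed for this direction). -/
open MeasureTheory Set Pointwise ENNReal
noncomputable section

variable {Ω : Type*} {m0 : MeasurableSpace Ω}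

/-- with `M_t ⊆ M_{t+s}`, `A_t ⊇ A_{t+s} + A_{t,t+s}^{M_{t+s}}` implies
`R_t(X) ⊇ ⋃_{Z ∈ R_{t+s}(X)} R_t(−Z)`; conversely (without any inclusion of eligible
sets), the latter implies the former. -/
theorem acceptance_supset_iff_risk_supset_union
    (μ : Measure Ω) [IsProbabilityMeasure μ] (p : ℝ≥0∞) [Fact (1 ≤ p)] (d : ℕ)
    (T : ℕ) (F : ℕ → MeasurableSpace Ω) (hFle : ∀ t, F t ≤ m0) (hFmono : Monotone F)
    (M : ℕ → Set (Lp (Ed d) p μ))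
    (hMF : ∀ t ≤ T, M t ⊆ {X | AEStronglyMeasurable[F t] X μ})
    (R : ℕ → Lp (Ed d) p μ → Set (Lp (Ed d) p μ))
    (hR : ∀ t ≤ T, IsCondRM μ p d (M t) (R t))
    (t s : ℕ) (hts : t + s ≤ T) :
    ((M t ⊆ M (t + s)) →
      {Z | 0 ∈ R (t + s) Z} + ({Z | 0 ∈ R t Z} ∩ M (t + s)) ⊆ {Z | 0 ∈ R t Z} →
      ∀ X : Lp (Ed d) p μ, (⋃ Z ∈ R (t + s) X, R t (-Z)) ⊆ R t X) ∧
    ((∀ X : Lp (Ed d) p μ, (⋃ Z ∈ R (t + s) X, R t (-Z)) ⊆ R t X) →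
      {Z | 0 ∈ R (t + s) Z} + ({Z | 0 ∈ R t Z} ∩ M (t + s)) ⊆ {Z | 0 ∈ R t Z}) := by
  obtain ⟨hRM_t, -, htrans_t, -, -, -⟩ := hR t (le_trans (Nat.le_add_right t s) hts)
  obtain ⟨hRM_ts, -, htrans_ts, -, -, -⟩ := hR (t + s) hts
  constructor
  · intro hMsub hA X Y hY
    simp only [mem_iUnion] at hY
    obtain ⟨Z, hZ, hU⟩ := hY
    have hZM : Z ∈ M (t + s) := hRM_ts X hZ
    have hUM : Y ∈ M t := hRM_t (-Z) hU
    have hUMs : Y ∈ M (t + s) := hMsub hUM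
    -- Step 1: Z - Y ∈ M (t+s)
    have h1 : Z - Y ∈ M (t + s) := by
      have hmem : Z - Y ∈ R (t + s) (X + Y) := by
        rw [htrans_ts X Y hUMs]; exact ⟨Z, hZ, rfl⟩
      exact hRM_ts _ hmem
    -- Step 2: Y ∈ R_{t+s}(X + (Z - Y))
    have h2 : Y ∈ R (t + s) (X + (Z - Y)) := by
      rw [htrans_ts X (Z - Y) h1]; exact ⟨Z, hZ, sub_sub_cancel Z Y⟩
    -- Step 3: Y - Z ∈ M (t+s)
    have h3 : Y - Z ∈ M (t + s) := by
      have hmem : Y - Z ∈ R (t + s) (X + (Z - Y) + Z) := by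
        rw [htrans_ts (X + (Z - Y)) Z hZM]; exact ⟨Y, h2, rfl⟩
      exact hRM_ts _ hmem
    -- X + Z is acceptable at time t+s
    have h4 : (0 : Lp (Ed d) p μ) ∈ R (t + s) (X + Z) := by
      rw [htrans_ts X Z hZM]; exact ⟨Z, hZ, sub_self Z⟩
    -- Y - Z is acceptable at time t
    have h5 : (0 : Lp (Ed d) p μ) ∈ R t (Y - Z) := by
      have heq : Y - Z = -Z + Y := by abel
      rw [heq, htrans_t (-Z) Y hUM]; exact ⟨Y, hU, sub_self Y⟩
    -- apply the acceptance-set hypothesis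
    have h6 : (0 : Lp (Ed d) p μ) ∈ R t (X + Y) := by
      apply hA
      rw [Set.mem_add]
      exact ⟨X + Z, h4, Y - Z, ⟨h5, h3⟩, by abel⟩
    -- conclude by translativity at t
    rw [htrans_t X Y hUM] at h6
    obtain ⟨u, hu, hu0⟩ := h6
    have : u = Y := by
      have := sub_eq_zero.mp hu0
      simpa using this
    exact this ▸ hu
  · intro h X hX
    rw [Set.mem_add] at hX
    obtain ⟨a, ha, m, ⟨hm, hmM⟩, rfl⟩ := hX
    have h1 : -m ∈ R (t + s) (a + m) := by
      rw [htrans_ts a m hmM]; exact ⟨0, ha, by simp⟩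
    apply h (a + m)
    simp only [mem_iUnion]
    exact ⟨-m, h1, by simpa using hm⟩
end
end

section
/- For a normalized dynamic risk measure (R_t), the following are equivalent: (i) multi-portfolio time consistency; (ii) for all t and A,B ⊆ L^p_d(F_T), ∪_{X∈A} R_{t+1}(X) = ∪_{Y∈B} R_{t+1}(Y) implies ∪_{X∈A} R_t(X) = ∪_{Y∈B} R_t(Y); (iii) recursiveness: R_t(X) = ∪_{Z ∈ R_{t+1}(X)} R_t(−Z) for all t < T and all X. If additionally M_t ⊆ M_{t+1} for all t, these are also equivalent to (iv) A_t = A_{t+1} + A_{t,t+1}^{M_{t+1}} for all t < T. -/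
open MeasureTheory Set Pointwise ENNReal
noncomputable section

variable {Ω : Type*} {m0 : MeasurableSpace Ω}

/-- Multi-portfolio time consistency of a dynamic risk measure `(R_t)_{t=0}^T`. -/
def MPTC (μ : Measure Ω) (p : ℝ≥0∞) (d : ℕ) (T : ℕ)
    (R : ℕ → Lp (Ed d) p μ → Set (Lp (Ed d) p μ)) : Prop :=
  ∀ t, t + 1 ≤ T → ∀ A B : Set (Lp (Ed d) p μ),
    (⋃ X ∈ A, R (t + 1) X) ⊆ (⋃ Y ∈ B, R (t + 1) Y) →
    (⋃ X ∈ A, R t X) ⊆ (⋃ Y ∈ B, R t Y)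

/-- for a normalized dynamic risk measure, multi-portfolio time consistency
is equivalent to the union-equality version and to recursiveness; if moreover
`M_t ⊆ M_{t+1}` for all `t`, these are equivalent to `A_t = A_{t+1} + A_{t,t+1}^{M_{t+1}}`. -/
theorem mptc_equivalences
    (μ : Measure Ω) [IsProbabilityMeasure μ] (p : ℝ≥0∞) [Fact (1 ≤ p)] (d : ℕ)
    (T : ℕ) (F : ℕ → MeasurableSpace Ω) (hFle : ∀ t, F t ≤ m0) (hFmono : Monotone F)
    (M : ℕ → Set (Lp (Ed d) p μ))
    (hMF : ∀ t ≤ T, M t ⊆ {X | AEStronglyMeasurable[F t] X μ})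
    (R : ℕ → Lp (Ed d) p μ → Set (Lp (Ed d) p μ))
    (hR : ∀ t ≤ T, IsCondRM μ p d (M t) (R t))
    (hnorm : ∀ t ≤ T, ∀ X, R t X = R t X + R t 0) :
    (MPTC μ p d T R ↔
      (∀ t, t + 1 ≤ T → ∀ A B : Set (Lp (Ed d) p μ),
        (⋃ X ∈ A, R (t + 1) X) = (⋃ Y ∈ B, R (t + 1) Y) →
        (⋃ X ∈ A, R t X) = (⋃ Y ∈ B, R t Y))) ∧
    (MPTC μ p d T R ↔
      (∀ t, t + 1 ≤ T → ∀ X : Lp (Ed d) p μ, R t X = ⋃ Z ∈ R (t + 1) X, R t (-Z))) ∧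
    ((∀ t, t + 1 ≤ T → M t ⊆ M (t + 1)) →
      (MPTC μ p d T R ↔
        (∀ t, t + 1 ≤ T →
          {Z | 0 ∈ R t Z} =
            {Z | 0 ∈ R (t + 1) Z} + ({Z | 0 ∈ R t Z} ∩ M (t + 1))))) := by
  -- Basic facts extracted from `IsCondRM`.
  have hsub : ∀ t, t ≤ T → ∀ X, R t X ⊆ M t := fun t ht => (hR t ht).1
  have htr : ∀ t, t ≤ T → ∀ X, ∀ m ∈ M t, R t (X + m) = (fun u => u - m) '' R t X :=
    fun t ht => (hR t ht).2.2.1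
  have hne : ∀ t, t ≤ T → (R t 0).Nonempty := fun t ht => (hR t ht).2.2.2.2.1
  have mem0 : ∀ t, t ≤ T → ∀ X m, m ∈ R t X → 0 ∈ R t (X + m) := by
    intro t ht X m hm
    rw [htr t ht X m (hsub t ht X hm)]
    exact ⟨m, hm, sub_self m⟩
  have mem0' : ∀ t, t ≤ T → ∀ X m, m ∈ M t → 0 ∈ R t (X + m) → m ∈ R t X := by
    intro t ht X m hmM h0
    rw [htr t ht X m hmM] at h0
    obtain ⟨v, hv, hv0⟩ := h0
    have hvm : v = m := by
      have : v - m = 0 := hv0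
      exact sub_eq_zero.mp this
    rwa [hvm] at hv
  have memR_iff : ∀ t, t ≤ T → ∀ X m, m ∈ M t → (m ∈ R t X ↔ 0 ∈ R t (X + m)) :=
    fun t ht X m hm => ⟨mem0 t ht X m, mem0' t ht X m hm⟩
  have ex0 : ∀ t, t ≤ T → ∃ Y, 0 ∈ R t Y := by
    intro t ht
    obtain ⟨w, hw⟩ := hne t ht
    exact ⟨0 + w, mem0 t ht 0 w hw⟩
  have negS : ∀ t, t ≤ T → ∀ m ∈ M t, ∃ Y, -m ∈ R t Y := by
    intro t ht m hm
    obtain ⟨Y, hY⟩ := ex0 t ht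
    refine ⟨Y + m, ?_⟩
    rw [htr t ht Y m hm]
    exact ⟨0, hY, zero_sub m⟩
  have negM : ∀ t, t ≤ T → ∀ m ∈ M t, -m ∈ M t := by
    intro t ht m hm
    obtain ⟨Y, hY⟩ := negS t ht m hm
    exact hsub t ht Y hY
  have addM : ∀ t, t ≤ T → ∀ m ∈ M t, ∀ m' ∈ M t, m + m' ∈ M t := by
    intro t ht m hm m' hm'
    obtain ⟨Y, hY⟩ := negS t ht m hm
    have h2 : -m - m' ∈ R t (Y + m') := by
      rw [htr t ht Y m' hm']
      exact ⟨-m, hY, rfl⟩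
    have h3 : -(-m - m') ∈ M t := negM t ht _ (hsub t ht _ h2)
    have h4 : -(-m - m') = m + m' := by abel
    rwa [h4] at h3
  -- The key union computation: ⋃_{Z ∈ R_{t+1}(X)} R_{t+1}(-Z) = R_{t+1}(X).
  have key_union : ∀ t, t + 1 ≤ T → ∀ X,
      (⋃ Z ∈ R (t + 1) X, R (t + 1) (-Z)) = R (t + 1) X := by
    intro t ht1 X
    apply Set.Subset.antisymm
    · intro u hu
      simp only [Set.mem_iUnion] at hu
      obtain ⟨Z, hZ, hu⟩ := hu
      have hZM : Z ∈ M (t + 1) := hsub _ ht1 _ hZ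
      have hRneg : R (t + 1) (-Z) = (fun v => v - (-Z)) '' R (t + 1) 0 := by
        have := htr (t + 1) ht1 0 (-Z) (negM (t + 1) ht1 Z hZM)
        rwa [zero_add] at this
      rw [hRneg] at hu
      obtain ⟨w, hw, hwu⟩ := hu
      have hwu' : w + Z = u := by
        have : w - (-Z) = u := hwu
        rwa [sub_neg_eq_add] at this
      rw [hnorm (t + 1) ht1 X, Set.mem_add]
      exact ⟨Z, hZ, w, hw, by rw [add_comm]; exact hwu'⟩
    · intro u hu
      rw [hnorm (t + 1) ht1 X, Set.mem_add] at hu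
      obtain ⟨v, hv, w, hw, hvw⟩ := hu
      simp only [Set.mem_iUnion]
      refine ⟨v, hv, ?_⟩
      have hRneg : R (t + 1) (-v) = (fun z => z - (-v)) '' R (t + 1) 0 := by
        have := htr (t + 1) ht1 0 (-v) (negM (t + 1) ht1 v (hsub _ ht1 _ hv))
        rwa [zero_add] at this
      rw [hRneg]
      refine ⟨w, hw, ?_⟩
      show w - (-v) = u
      rw [sub_neg_eq_add, add_comm]
      exact hvw
  -- MPTC implies recursiveness.
  have mptc_rec : MPTC μ p d T R →
      ∀ t, t + 1 ≤ T → ∀ X, R t X = ⋃ Z ∈ R (t + 1) X, R t (-Z) := by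
    intro h t ht X
    have hkey := key_union t ht X
    have hAB : (⋃ X' ∈ ({X} : Set (Lp (Ed d) p μ)), R (t + 1) X') ⊆
        ⋃ Y ∈ (fun Z => -Z) '' R (t + 1) X, R (t + 1) Y := by
      rw [Set.biUnion_singleton, Set.biUnion_image, hkey]
    have hBA : (⋃ Y ∈ (fun Z => -Z) '' R (t + 1) X, R (t + 1) Y) ⊆
        ⋃ X' ∈ ({X} : Set (Lp (Ed d) p μ)), R (t + 1) X' := by
      rw [Set.biUnion_singleton, Set.biUnion_image, hkey]
    have h1 := h t ht _ _ hAB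
    have h2 := h t ht _ _ hBA
    rw [Set.biUnion_singleton, Set.biUnion_image] at h1 h2
    exact Set.Subset.antisymm h1 h2
  -- Recursiveness implies MPTC.
  have rec_mptc : (∀ t, t + 1 ≤ T → ∀ X, R t X = ⋃ Z ∈ R (t + 1) X, R t (-Z)) →
      MPTC μ p d T R := by
    intro hrec t ht A B hAB u hu
    simp only [Set.mem_iUnion] at hu ⊢
    obtain ⟨X, hX, hu⟩ := hu
    rw [hrec t ht X] at hu
    simp only [Set.mem_iUnion] at hu
    obtain ⟨Z, hZ, hu⟩ := hu
    have hZB : Z ∈ ⋃ Y ∈ B, R (t + 1) Y := hAB (Set.mem_biUnion hX hZ)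
    simp only [Set.mem_iUnion] at hZB
    obtain ⟨Y, hY, hZY⟩ := hZB
    refine ⟨Y, hY, ?_⟩
    rw [hrec t ht Y]
    exact Set.mem_biUnion hZY hu
  have h2iff : MPTC μ p d T R ↔
      (∀ t, t + 1 ≤ T → ∀ X, R t X = ⋃ Z ∈ R (t + 1) X, R t (-Z)) :=
    ⟨mptc_rec, rec_mptc⟩
  -- Recursiveness implies the acceptance-set decomposition.
  have rec_decomp : (∀ t, t + 1 ≤ T → ∀ X, R t X = ⋃ Z ∈ R (t + 1) X, R t (-Z)) →
      ∀ t, t + 1 ≤ T →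
        {Z | 0 ∈ R t Z} = {Z | 0 ∈ R (t + 1) Z} + ({Z | 0 ∈ R t Z} ∩ M (t + 1)) := by
    intro hrec t ht
    have ht1 : t + 1 ≤ T := ht
    ext X
    constructor
    · intro hX
      simp only [Set.mem_setOf_eq] at hX
      rw [hrec t ht X] at hX
      simp only [Set.mem_iUnion] at hX
      obtain ⟨Z, hZ, h0⟩ := hX
      have hZM : Z ∈ M (t + 1) := hsub _ ht1 _ hZ
      rw [Set.mem_add]
      exact ⟨X + Z, mem0 (t + 1) ht1 X Z hZ, -Z, ⟨h0, negM (t + 1) ht1 Z hZM⟩,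
        add_neg_cancel_right X Z⟩
    · intro hX
      rw [Set.mem_add] at hX
      obtain ⟨Z1, hZ1, Z2, ⟨hZ2, hZ2M⟩, hsum⟩ := hX
      simp only [Set.mem_setOf_eq] at hZ1 hZ2 ⊢
      rw [hrec t ht X]
      have hneg : -Z2 ∈ R (t + 1) X := by
        have htr' := htr (t + 1) ht1 Z1 Z2 hZ2M
        rw [hsum] at htr'
        rw [htr']
        exact ⟨0, hZ1, zero_sub Z2⟩
      refine Set.mem_biUnion hneg ?_
      rw [neg_neg]
      exact hZ2
  -- The decomposition (with nested eligible sets) implies recursiveness.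
  have decomp_rec : (∀ t, t + 1 ≤ T → M t ⊆ M (t + 1)) →
      (∀ t, t + 1 ≤ T →
        {Z | 0 ∈ R t Z} = {Z | 0 ∈ R (t + 1) Z} + ({Z | 0 ∈ R t Z} ∩ M (t + 1))) →
      ∀ t, t + 1 ≤ T → ∀ X, R t X = ⋃ Z ∈ R (t + 1) X, R t (-Z) := by
    intro hM hdec t ht X
    have htT : t ≤ T := le_trans (Nat.le_succ t) ht
    have ht1 : t + 1 ≤ T := ht
    ext u
    simp only [Set.mem_iUnion]
    constructor
    · intro hu
      have huM : u ∈ M t := hsub t htT X hu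
      have h0 : 0 ∈ R t (X + u) := mem0 t htT X u hu
      have hXu : X + u ∈ {Z | 0 ∈ R (t + 1) Z} + ({Z | 0 ∈ R t Z} ∩ M (t + 1)) := by
        rw [← hdec t ht]
        exact h0
      rw [Set.mem_add] at hXu
      obtain ⟨Z1, hZ1, Z2, ⟨hZ2, hZ2M⟩, hsum⟩ := hXu
      simp only [Set.mem_setOf_eq] at hZ1 hZ2
      refine ⟨u - Z2, ?_, ?_⟩
      · have hm : Z2 - u ∈ M (t + 1) := by
          have := addM (t + 1) ht1 Z2 hZ2M (-u) (negM (t + 1) ht1 u (hM t ht huM))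
          rwa [← sub_eq_add_neg] at this
        have hXeq : Z1 + (Z2 - u) = X := by
          rw [← add_sub_assoc, hsum, add_sub_cancel_right]
        have htr' := htr (t + 1) ht1 Z1 (Z2 - u) hm
        rw [hXeq] at htr'
        rw [htr']
        refine ⟨0, hZ1, ?_⟩
        show (0 : Lp (Ed d) p μ) - (Z2 - u) = u - Z2
        abel
      · rw [neg_sub]
        refine (memR_iff t htT (Z2 - u) u huM).mpr ?_
        rwa [sub_add_cancel]
    · rintro ⟨Z, hZ, hu⟩
      have hZM : Z ∈ M (t + 1) := hsub _ ht1 _ hZ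
      have huM : u ∈ M t := hsub t htT _ hu
      refine (memR_iff t htT X u huM).mpr ?_
      have hXu : X + u ∈ {Z | 0 ∈ R (t + 1) Z} + ({Z | 0 ∈ R t Z} ∩ M (t + 1)) := by
        rw [Set.mem_add]
        refine ⟨X + Z, mem0 (t + 1) ht1 X Z hZ, u - Z, ⟨?_, ?_⟩, by abel⟩
        · have := mem0 t htT (-Z) u hu
          rwa [neg_add_eq_sub] at this
        · have := addM (t + 1) ht1 u (hM t ht huM) (-Z) (negM (t + 1) ht1 Z hZM)
          rwa [← sub_eq_add_neg] at this
      have h' : X + u ∈ {Z | 0 ∈ R t Z} := by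
        rw [hdec t ht]
        exact hXu
      exact h'
  refine ⟨?_, h2iff, fun hM => ⟨fun h => rec_decomp (h2iff.mp h) ,
    fun h => h2iff.mpr (decomp_rec hM h)⟩⟩
  constructor
  · intro h t ht A B hAB
    exact Set.Subset.antisymm (h t ht A B hAB.subset) (h t ht B A hAB.symm.subset)
  · intro h t ht A B hAB
    have heq : (⋃ X ∈ A ∪ B, R (t + 1) X) = ⋃ Y ∈ B, R (t + 1) Y := by
      rw [Set.biUnion_union, Set.union_eq_right.mpr hAB]
    have h2 := h t ht (A ∪ B) B heq
    rw [Set.biUnion_union] at h2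
    exact Set.subset_union_left.trans h2.subset
end
end

section
/- Let (R_t) be a normalized time consistent dynamic risk measure such that for every t < T and every X ∈ L^p_d(F_T) there exists Ẑ ∈ R_{t+1}(X) with R_{t+1}(−Ẑ) ⊇ R_{t+1}(X). Then (R_t) is multi-portfolio time consistent; in fact it is recursive: R_t(X) = ∪_{Z ∈ R_{t+1}(X)} R_t(−Z). -/
open MeasureTheory Set Pointwise ENNReal
noncomputable section

variable {Ω : Type*} {m0 : MeasurableSpace Ω}

/-- a normalized time consistent dynamic risk measure such that for every
`t < T` and `X` there is `Ẑ ∈ R_{t+1}(X)` with `R_{t+1}(−Ẑ) ⊇ R_{t+1}(X)` is recursive,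
and hence multi-portfolio time consistent. -/
theorem time_consistent_implies_mptc
    (μ : Measure Ω) [IsProbabilityMeasure μ] (p : ℝ≥0∞) [Fact (1 ≤ p)] (d : ℕ)
    (T : ℕ) (F : ℕ → MeasurableSpace Ω) (hFle : ∀ t, F t ≤ m0) (hFmono : Monotone F)
    (M : ℕ → Set (Lp (Ed d) p μ))
    (hMF : ∀ t ≤ T, M t ⊆ {X | AEStronglyMeasurable[F t] X μ})
    (R : ℕ → Lp (Ed d) p μ → Set (Lp (Ed d) p μ))
    (hR : ∀ t ≤ T, IsCondRM μ p d (M t) (R t))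
    (hnorm : ∀ t ≤ T, ∀ X, R t X = R t X + R t 0)
    (htc : ∀ t, t + 1 ≤ T → ∀ X Y : Lp (Ed d) p μ,
      R (t + 1) X ⊆ R (t + 1) Y → R t X ⊆ R t Y)
    (hZ : ∀ t, t + 1 ≤ T → ∀ X : Lp (Ed d) p μ,
      ∃ Z ∈ R (t + 1) X, R (t + 1) X ⊆ R (t + 1) (-Z)) :
    (∀ t, t + 1 ≤ T → ∀ X : Lp (Ed d) p μ, R t X = ⋃ Z ∈ R (t + 1) X, R t (-Z)) ∧
      MPTC μ p d T R := by
  have key : ∀ t, t + 1 ≤ T → ∀ X Z : Lp (Ed d) p μ, Z ∈ R (t+1) X →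
      R (t+1) (-Z) ⊆ R (t+1) X := by
    intro t ht X Z hZX u hu
    obtain ⟨hsub, hM, htr, hmono, hne, hneq⟩ := hR (t+1) ht
    have hZM : Z ∈ M (t+1) := hsub X hZX
    have h0 : R (t+1) (0 : Lp (Ed d) p μ) = (fun u => u - Z) '' R (t+1) (-Z) := by
      have := htr (-Z) Z hZM
      simpa using this
    have hu0 : u - Z ∈ R (t+1) (0 : Lp (Ed d) p μ) := h0 ▸ ⟨u, hu, rfl⟩
    have hmem : Z + (u - Z) ∈ R (t+1) X + R (t+1) 0 := Set.add_mem_add hZX hu0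
    rw [← hnorm (t+1) ht X] at hmem
    have heq : Z + (u - Z) = u := by abel
    rwa [heq] at hmem
  have hrec : ∀ t, t + 1 ≤ T → ∀ X : Lp (Ed d) p μ,
      R t X = ⋃ Z ∈ R (t+1) X, R t (-Z) := by
    intro t ht X
    apply Set.Subset.antisymm
    · obtain ⟨Zh, hZh, hsup⟩ := hZ t ht X
      exact (htc t ht X (-Zh) hsup).trans (Set.subset_biUnion_of_mem (u := fun Z => R t (-Z)) hZh)
    · intro u hu
      simp only [Set.mem_iUnion] at hu
      obtain ⟨Z, hZX, hu⟩ := hu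
      exact htc t ht (-Z) X (key t ht X Z hZX) hu
  refine ⟨hrec, ?_⟩
  intro t ht A B hAB u hu
  simp only [Set.mem_iUnion] at hu ⊢
  obtain ⟨X, hX, hu⟩ := hu
  rw [hrec t ht X] at hu
  simp only [Set.mem_iUnion] at hu
  obtain ⟨Z, hZX, hu⟩ := hu
  have hZB : Z ∈ ⋃ Y ∈ B, R (t+1) Y := hAB (Set.mem_biUnion hX hZX)
  simp only [Set.mem_iUnion] at hZB
  obtain ⟨Y, hY, hZY⟩ := hZB
  exact ⟨Y, hY, htc t ht (-Z) Y (key t ht Y Z hZY) hu⟩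
end
end

section
/- If (R_t) is a time consistent dynamic risk measure and R_τ is normalized for some time τ, then for every t ≤ τ, R_t is R_τ(0)-monotone: Y − X ∈ R_τ(0) implies R_t(Y) ⊇ R_t(X). -/
open MeasureTheory Set Pointwise ENNReal
noncomputable section

variable {Ω : Type*} {m0 : MeasurableSpace Ω}

/-- if `(R_t)` is time consistent and `R_τ` is normalized, then for every
`t ≤ τ`, `R_t` is `R_τ(0)`-monotone. -/
theorem time_consistent_normalized_monotone
    (μ : Measure Ω) [IsProbabilityMeasure μ] (p : ℝ≥0∞) [Fact (1 ≤ p)] (d : ℕ)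
    (T : ℕ) (F : ℕ → MeasurableSpace Ω) (hFle : ∀ t, F t ≤ m0) (hFmono : Monotone F)
    (M : ℕ → Set (Lp (Ed d) p μ))
    (hMF : ∀ t ≤ T, M t ⊆ {X | AEStronglyMeasurable[F t] X μ})
    (R : ℕ → Lp (Ed d) p μ → Set (Lp (Ed d) p μ))
    (hR : ∀ t ≤ T, IsCondRM μ p d (M t) (R t))
    (htc : ∀ t, t + 1 ≤ T → ∀ X Y : Lp (Ed d) p μ,
      R (t + 1) X ⊆ R (t + 1) Y → R t X ⊆ R t Y)
    (τ : ℕ) (hτ : τ ≤ T)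
    (hnormτ : ∀ X, R τ X = R τ X + R τ 0) :
    ∀ t ≤ τ, ∀ X Y : Lp (Ed d) p μ, Y - X ∈ R τ 0 → R t X ⊆ R t Y := by
  intro t ht X Y hXY
  obtain ⟨hM, hnorm, htrans, hmono, hne, hneq⟩ := hR τ hτ
  have hτstep : R τ X ⊆ R τ Y := by
    have hmem : Y - X ∈ M τ := hM 0 hXY
    have hY : Y = X + (Y - X) := by abel
    intro u hu
    have h1 : u + (Y - X) ∈ R τ X := by
      rw [hnormτ X]; exact Set.add_mem_add hu hXY
    rw [hY, htrans X _ hmem]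
    exact ⟨u + (Y - X), h1, add_sub_cancel_right u (Y - X)⟩
  have key : ∀ k t, t + k = τ → R t X ⊆ R t Y := by
    intro k
    induction k with
    | zero => intro t h; simpa [← h] using hτstep
    | succ k ih =>
      intro t h
      exact htc t (by omega) X Y (ih (t + 1) (by omega))
  obtain ⟨k, hk⟩ := Nat.exists_eq_add_of_le ht
  exact key k t hk.symm
end
end

section
/- Let (R_t) be a dynamic risk measure with M_t ⊆ M_{t+1} for all t < T. Define the backward composition (R̃_t) by R̃_T(X) = R_T(X) and R̃_t(X) = ∪_{Z ∈ R̃_{t+1}(X)} R_t(−Z) for t < T. Then (R̃_t) is multi-portfolio time consistent, each R̃_t is M_t-translative and L^p_d(F_T)_+-monotone, and if (R_t) is (conditionally) convex then so is (R̃_t). -/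
open MeasureTheory Set Pointwise ENNReal
noncomputable section

variable {Ω : Type*} {m0 : MeasurableSpace Ω}

/-- Multiplication of an `L^p` random vector by an essentially bounded scalar field. -/
def bsmul (μ : Measure Ω) (p : ℝ≥0∞) (d : ℕ) (l : Lp ℝ ⊤ μ) (X : Lp (Ed d) p μ) :
    Lp (Ed d) p μ :=
  (MemLp.smul (r := p) (Lp.memLp X) (Lp.memLp l)).toLp (fun ω => l ω • X ω)

/-- The constant function `1` as an element of `L^∞`. -/
def oneL (μ : Measure Ω) : Lp ℝ ⊤ μ := (memLp_top_const (1:ℝ)).toLp _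

lemma bsmul_neg (μ : Measure Ω) (p : ℝ≥0∞) (d : ℕ) (l : Lp ℝ ⊤ μ) (X : Lp (Ed d) p μ) :
    bsmul μ p d l (-X) = - bsmul μ p d l X := by
  apply Lp.ext
  have hA : ⇑(bsmul μ p d l (-X)) =ᵐ[μ] fun ω => l ω • (-X) ω := MemLp.coeFn_toLp _
  have hB : ⇑(bsmul μ p d l X) =ᵐ[μ] fun ω => l ω • X ω := MemLp.coeFn_toLp _
  have hC : ⇑(-X) =ᵐ[μ] -⇑X := Lp.coeFn_neg X
  have hD : ⇑(-(bsmul μ p d l X)) =ᵐ[μ] -⇑(bsmul μ p d l X) := Lp.coeFn_neg _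
  filter_upwards [hA, hB, hC, hD] with ω hA hB hC hD
  rw [hA, hD, Pi.neg_apply, hB, hC, Pi.neg_apply, smul_neg]

/-- the backward composition `R̃_T = R_T`,
`R̃_t(X) = ⋃_{Z ∈ R̃_{t+1}(X)} R_t(−Z)` of a dynamic risk measure is multi-portfolio time
consistent, `M_t`-translative and monotone, and inherits (conditional) convexity. -/
theorem backward_composition_mptc
    (μ : Measure Ω) [IsProbabilityMeasure μ] (p : ℝ≥0∞) [Fact (1 ≤ p)] (d : ℕ)
    (T : ℕ) (F : ℕ → MeasurableSpace Ω) (hFle : ∀ t, F t ≤ m0) (hFmono : Monotone F)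
    (M : ℕ → Set (Lp (Ed d) p μ))
    (hMF : ∀ t ≤ T, M t ⊆ {X | AEStronglyMeasurable[F t] X μ})
    (hMmono : ∀ t, t + 1 ≤ T → M t ⊆ M (t + 1))
    (R : ℕ → Lp (Ed d) p μ → Set (Lp (Ed d) p μ))
    (hR : ∀ t ≤ T, IsCondRM μ p d (M t) (R t))
    (Rtil : ℕ → Lp (Ed d) p μ → Set (Lp (Ed d) p μ))
    (hT : ∀ X, Rtil T X = R T X)
    (hrec : ∀ t, t + 1 ≤ T → ∀ X, Rtil t X = ⋃ Z ∈ Rtil (t + 1) X, R t (-Z)) :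
    -- multi-portfolio time consistency
    MPTC μ p d T Rtil ∧
    -- M_t-translativity
    (∀ t ≤ T, ∀ X : Lp (Ed d) p μ, ∀ m ∈ M t,
      Rtil t (X + m) = (fun u => u - m) '' Rtil t X) ∧
    -- monotonicity
    (∀ t ≤ T, ∀ X Y : Lp (Ed d) p μ, Y - X ∈ LposT μ p d → Rtil t X ⊆ Rtil t Y) ∧
    -- convexity is inherited
    ((∀ t ≤ T, ∀ X Y : Lp (Ed d) p μ, ∀ c : ℝ, c ∈ Set.Icc (0:ℝ) 1 →
        c • R t X + (1 - c) • R t Y ⊆ R t (c • X + (1 - c) • Y)) →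
      (∀ t ≤ T, ∀ X Y : Lp (Ed d) p μ, ∀ c : ℝ, c ∈ Set.Icc (0:ℝ) 1 →
        c • Rtil t X + (1 - c) • Rtil t Y ⊆ Rtil t (c • X + (1 - c) • Y))) ∧
    -- conditional convexity is inherited
    ((∀ t ≤ T, ∀ X Y : Lp (Ed d) p μ, ∀ l : Lp ℝ ⊤ μ,
        AEStronglyMeasurable[F t] (⇑l) μ → (∀ᵐ ω ∂μ, l ω ∈ Set.Icc (0:ℝ) 1) →
        bsmul μ p d l '' R t X + bsmul μ p d (oneL μ - l) '' R t Y ⊆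
          R t (bsmul μ p d l X + bsmul μ p d (oneL μ - l) Y)) →
      (∀ t ≤ T, ∀ X Y : Lp (Ed d) p μ, ∀ l : Lp ℝ ⊤ μ,
        AEStronglyMeasurable[F t] (⇑l) μ → (∀ᵐ ω ∂μ, l ω ∈ Set.Icc (0:ℝ) 1) →
        bsmul μ p d l '' Rtil t X + bsmul μ p d (oneL μ - l) '' Rtil t Y ⊆
          Rtil t (bsmul μ p d l X + bsmul μ p d (oneL μ - l) Y))) := by
  
  -- MPTC
  have mptc : MPTC μ p d T Rtil := by
    intro t h1 A B hAB u hu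
    obtain ⟨X, hX, hu⟩ := mem_iUnion₂.mp hu
    rw [hrec t h1] at hu
    obtain ⟨Z, hZ, hu⟩ := mem_iUnion₂.mp hu
    obtain ⟨Y, hY, hZY⟩ := mem_iUnion₂.mp (hAB (mem_iUnion₂.mpr ⟨X, hX, hZ⟩))
    exact mem_iUnion₂.mpr ⟨Y, hY, by rw [hrec t h1]; exact mem_iUnion₂.mpr ⟨Z, hZY, hu⟩⟩
  -- translativity
  have trans : ∀ k t, t + k = T → ∀ X : Lp (Ed d) p μ, ∀ m ∈ M t,
      Rtil t (X + m) = (fun u => u - m) '' Rtil t X := by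
    intro k
    induction k with
    | zero =>
      intro t ht X m hm
      have : t = T := by omega
      subst this
      rw [hT, hT]
      exact (hR t le_rfl).2.2.1 X m hm
    | succ k ih =>
      intro t ht X m hm
      have h1 : t + 1 ≤ T := by omega
      have htT : t ≤ T := by omega
      rw [hrec t h1, hrec t h1, ih (t+1) (by omega) X m (hMmono t h1 hm)]
      ext u
      simp only [Set.mem_iUnion, Set.mem_image, exists_prop]
      constructor
      · rintro ⟨Z, ⟨W, hW, rfl⟩, hu⟩
        have he : -(W - m) = -W + m := by abel
        rw [he, (hR t htT).2.2.1 (-W) m hm] at hu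
        obtain ⟨v, hv, rfl⟩ := hu
        exact ⟨v, ⟨W, hW, hv⟩, rfl⟩
      · rintro ⟨v, ⟨W, hW, hv⟩, rfl⟩
        refine ⟨W - m, ⟨W, hW, rfl⟩, ?_⟩
        have he : -(W - m) = -W + m := by abel
        rw [he, (hR t htT).2.2.1 (-W) m hm]
        exact ⟨v, hv, rfl⟩
  -- monotonicity
  have mono : ∀ k t, t + k = T → ∀ X Y : Lp (Ed d) p μ, Y - X ∈ LposT μ p d →
      Rtil t X ⊆ Rtil t Y := by
    intro k
    induction k with
    | zero =>
      intro t ht X Y hXY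
      have : t = T := by omega
      subst this
      rw [hT, hT]
      exact (hR t le_rfl).2.2.2.1 X Y hXY
    | succ k ih =>
      intro t ht X Y hXY
      have h1 : t + 1 ≤ T := by omega
      rw [hrec t h1, hrec t h1]
      intro u hu
      obtain ⟨Z, hZ, hu⟩ := mem_iUnion₂.mp hu
      exact mem_iUnion₂.mpr ⟨Z, ih (t+1) (by omega) X Y hXY hZ, hu⟩
  -- convexity
  have conv : (∀ t ≤ T, ∀ X Y : Lp (Ed d) p μ, ∀ c : ℝ, c ∈ Set.Icc (0:ℝ) 1 →
        c • R t X + (1 - c) • R t Y ⊆ R t (c • X + (1 - c) • Y)) →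
      ∀ k t, t + k = T → ∀ X Y : Lp (Ed d) p μ, ∀ c : ℝ, c ∈ Set.Icc (0:ℝ) 1 →
        c • Rtil t X + (1 - c) • Rtil t Y ⊆ Rtil t (c • X + (1 - c) • Y) := by
    intro hconv k
    induction k with
    | zero =>
      intro t ht X Y c hc
      have : t = T := by omega
      subst this
      rw [hT, hT, hT]
      exact hconv t le_rfl X Y c hc
    | succ k ih =>
      intro t ht X Y c hc
      have h1 : t + 1 ≤ T := by omega
      have htT : t ≤ T := by omega
      intro u hu
      obtain ⟨a, ha, b, hb, rfl⟩ := hu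
      obtain ⟨a', ha', rfl⟩ := ha
      obtain ⟨b', hb', rfl⟩ := hb
      rw [hrec t h1] at ha' hb'
      obtain ⟨Zx, hZx, ha'⟩ := mem_iUnion₂.mp ha'
      obtain ⟨Zy, hZy, hb'⟩ := mem_iUnion₂.mp hb'
      rw [hrec t h1]
      refine mem_iUnion₂.mpr ⟨c • Zx + (1 - c) • Zy, ?_, ?_⟩
      · exact ih (t+1) (by omega) X Y c hc
          (Set.add_mem_add (Set.smul_mem_smul_set hZx) (Set.smul_mem_smul_set hZy))
      · have he : -(c • Zx + (1 - c) • Zy) = c • (-Zx) + (1 - c) • (-Zy) := by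
          rw [smul_neg, smul_neg, neg_add]
        rw [he]
        exact hconv t htT (-Zx) (-Zy) c hc
          (Set.add_mem_add (Set.smul_mem_smul_set ha') (Set.smul_mem_smul_set hb'))
  -- conditional convexity
  have cconv : (∀ t ≤ T, ∀ X Y : Lp (Ed d) p μ, ∀ l : Lp ℝ ⊤ μ,
        AEStronglyMeasurable[F t] (⇑l) μ → (∀ᵐ ω ∂μ, l ω ∈ Set.Icc (0:ℝ) 1) →
        bsmul μ p d l '' R t X + bsmul μ p d (oneL μ - l) '' R t Y ⊆
          R t (bsmul μ p d l X + bsmul μ p d (oneL μ - l) Y)) →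
      ∀ k t, t + k = T → ∀ X Y : Lp (Ed d) p μ, ∀ l : Lp ℝ ⊤ μ,
        AEStronglyMeasurable[F t] (⇑l) μ → (∀ᵐ ω ∂μ, l ω ∈ Set.Icc (0:ℝ) 1) →
        bsmul μ p d l '' Rtil t X + bsmul μ p d (oneL μ - l) '' Rtil t Y ⊆
          Rtil t (bsmul μ p d l X + bsmul μ p d (oneL μ - l) Y) := by
    intro hconv k
    induction k with
    | zero =>
      intro t ht X Y l hl hl01
      have : t = T := by omega
      subst this
      rw [hT, hT, hT]
      exact hconv t le_rfl X Y l hl hl01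
    | succ k ih =>
      intro t ht X Y l hl hl01
      have h1 : t + 1 ≤ T := by omega
      have htT : t ≤ T := by omega
      intro u hu
      obtain ⟨a, ha, b, hb, rfl⟩ := hu
      obtain ⟨a', ha', rfl⟩ := ha
      obtain ⟨b', hb', rfl⟩ := hb
      rw [hrec t h1] at ha' hb'
      obtain ⟨Zx, hZx, ha'⟩ := mem_iUnion₂.mp ha'
      obtain ⟨Zy, hZy, hb'⟩ := mem_iUnion₂.mp hb'
      rw [hrec t h1]
      refine mem_iUnion₂.mpr ⟨bsmul μ p d l Zx + bsmul μ p d (oneL μ - l) Zy, ?_, ?_⟩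
      · exact ih (t+1) (by omega) X Y l (hl.mono (hFmono (Nat.le_succ t))) hl01
          (Set.add_mem_add (Set.mem_image_of_mem _ hZx) (Set.mem_image_of_mem _ hZy))
      · have he : -(bsmul μ p d l Zx + bsmul μ p d (oneL μ - l) Zy)
            = bsmul μ p d l (-Zx) + bsmul μ p d (oneL μ - l) (-Zy) := by
          rw [bsmul_neg, bsmul_neg, neg_add]
        rw [he]
        exact hconv t htT (-Zx) (-Zy) l hl hl01
          (Set.add_mem_add (Set.mem_image_of_mem _ ha') (Set.mem_image_of_mem _ hb'))
  refine ⟨mptc, fun t ht => trans (T - t) t (by omega), fun t ht => mono (T - t) t (by omega),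
    fun h t ht => conv h (T - t) t (by omega), fun h t ht => cconv h (T - t) t (by omega)⟩
end
end

section
/- Let (R_t) be a normalized multi-portfolio time consistent dynamic risk measure with M_t ⊆ M_{t+1} for all t < T. Then (R_t) is market-compatible (i.e. A_t = A_t + K_t^{M_t} for every t) if and only if A_t = A_t + Σ_{τ=t}^{T} K_τ^{M_τ} for every t. -/
open MeasureTheory Set Pointwise ENNReal
noncomputable section

variable {Ω : Type*} {m0 : MeasurableSpace Ω}

/-- for a normalized multi-portfolio time consistent dynamic risk measure
with increasing eligible portfolios, market-compatibility `A_t = A_t + K_t^{M_t}` for all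
`t` is equivalent to `A_t = A_t + Σ_{τ=t}^{T} K_τ^{M_τ}` for all `t`.  Here
`LK τ = L^p_d(F_τ;K_τ)` and `K_τ^{M_τ} = M_τ ∩ LK τ`. -/
theorem market_compatible_iff_sum
    (μ : Measure Ω) [IsProbabilityMeasure μ] (p : ℝ≥0∞) [Fact (1 ≤ p)] (d : ℕ)
    (T : ℕ) (F : ℕ → MeasurableSpace Ω) (hFle : ∀ t, F t ≤ m0) (hFmono : Monotone F)
    (M : ℕ → Set (Lp (Ed d) p μ))
    (hMF : ∀ t ≤ T, M t ⊆ {X | AEStronglyMeasurable[F t] X μ})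
    (hMmono : ∀ t, t + 1 ≤ T → M t ⊆ M (t + 1))
    (R : ℕ → Lp (Ed d) p μ → Set (Lp (Ed d) p μ))
    (hR : ∀ t ≤ T, IsCondRM μ p d (M t) (R t))
    (hnorm : ∀ t ≤ T, ∀ X, R t X = R t X + R t 0)
    (hmptc : MPTC μ p d T R)
    -- `LK t` models the solvent positions `L^p_d(F_t; K_t)`: a convex cone of
    -- `F_t`-measurable positions containing the nonnegative `F_t`-measurable ones
    (LK : ℕ → Set (Lp (Ed d) p μ))
    (hLKF : ∀ t ≤ T, LK t ⊆ {X | AEStronglyMeasurable[F t] X μ})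
    (hLK0 : ∀ t ≤ T, (0 : Lp (Ed d) p μ) ∈ LK t)
    (hLKconvex : ∀ t ≤ T, Convex ℝ (LK t))
    (hLKcone : ∀ t ≤ T, ∀ c : ℝ, 0 < c → c • LK t ⊆ LK t)
    (hLKpos : ∀ t ≤ T, ({X : Lp (Ed d) p μ | AEStronglyMeasurable[F t] X μ} ∩ LposT μ p d) ⊆ LK t) :
    (∀ t ≤ T, {Z | 0 ∈ R t Z} = {Z | 0 ∈ R t Z} + (M t ∩ LK t)) ↔
      (∀ t ≤ T, {Z | 0 ∈ R t Z} =
        {Z | 0 ∈ R t Z} + ∑ τ ∈ Finset.Icc t T, (M τ ∩ LK τ)) := by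
  -- notation
  classical
  set A : ℕ → Set (Lp (Ed d) p μ) := fun t => {Z | 0 ∈ R t Z} with hA
  set S : ℕ → Set (Lp (Ed d) p μ) := fun t => M t ∩ LK t with hS
  -- 0 belongs to every M τ (τ ≤ T)
  have h0M : ∀ τ ≤ T, (0 : Lp (Ed d) p μ) ∈ M τ := by
    intro τ hτ
    obtain ⟨hRM, -, htrans, -, ⟨u, hu⟩, -⟩ := hR τ hτ
    have h0 : (0 : Lp (Ed d) p μ) ∈ R τ (0 + u) := by
      rw [htrans 0 u (hRM 0 hu)]
      exact ⟨u, hu, sub_self u⟩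
    exact hRM _ h0
  have hS0 : ∀ τ ≤ T, (0 : Lp (Ed d) p μ) ∈ S τ := fun τ hτ => ⟨h0M τ hτ, hLK0 τ hτ⟩
  -- 0 belongs to the finset sum of the cones
  have hSum0 : ∀ t ≤ T, (0 : Lp (Ed d) p μ) ∈ ∑ τ ∈ Finset.Icc t T, S τ := by
    intro t ht
    have := Set.finset_sum_mem_finset_sum (Finset.Icc t T) S (fun _ => 0)
      (fun i hi => hS0 i (Finset.mem_Icc.mp hi).2)
    simpa using this
  -- translativity characterization: u ∈ R τ X ↔ X + u ∈ A τ (for u ∈ M τ)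
  -- key property P t W : ∀ X, R t X ⊆ R t (X + W)
  -- compatibility at τ gives P τ W for W ∈ S τ
  have hPcompat : ∀ τ ≤ T, A τ = A τ + S τ → ∀ W ∈ S τ, ∀ X, R τ X ⊆ R τ (X + W) := by
    intro τ hτ hcomp W hW X u hu
    obtain ⟨hRM, -, htrans, -, -, -⟩ := hR τ hτ
    have huM : u ∈ M τ := hRM X hu
    have hXu : X + u ∈ A τ := by
      show (0 : Lp (Ed d) p μ) ∈ R τ (X + u)
      rw [htrans X u huM]
      exact ⟨u, hu, sub_self u⟩
    have hXuW : X + u + W ∈ A τ := by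
      rw [hcomp]
      exact Set.add_mem_add hXu hW
    have h0 : (0 : Lp (Ed d) p μ) ∈ R τ (X + W + u) := by
      have : X + u + W = X + W + u := by abel
      rwa [this] at hXuW
    rw [htrans (X + W) u huM] at h0
    obtain ⟨v, hv, hv0⟩ := h0
    have : v = u := by
      have := sub_eq_zero.mp hv0
      simpa using this
    rwa [this] at hv
  -- MPTC pushes P down one step
  have hPdown : ∀ t, t + 1 ≤ T → ∀ W : Lp (Ed d) p μ,
      (∀ X, R (t + 1) X ⊆ R (t + 1) (X + W)) → ∀ X, R t X ⊆ R t (X + W) := by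
    intro t ht W hP X
    have h := hmptc t ht {X} ({X + W} : Set (Lp (Ed d) p μ)) (by simpa using hP X)
    simpa using h
  -- P propagates down from τ to t ≤ τ
  have hPprop : ∀ n t, t + n ≤ T → ∀ W : Lp (Ed d) p μ,
      (∀ X, R (t + n) X ⊆ R (t + n) (X + W)) → ∀ X, R t X ⊆ R t (X + W) := by
    intro n
    induction n with
    | zero => intro t _ W h; simpa using h
    | succ n ih =>
      intro t ht W h
      refine ih t (by omega) W ?_
      refine hPdown (t + n) (by omega) W ?_
      have : t + n + 1 = t + (n + 1) := by omega
      rw [this]; exact h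
  constructor
  · -- forward: compatibility at each time implies the sum version
    intro hcomp t ht
    apply Set.Subset.antisymm
    · intro Z hZ
      exact ⟨Z, hZ, 0, hSum0 t ht, by simp⟩
    · rintro _ ⟨z, hz, w, hw, rfl⟩
      rw [Set.mem_finset_sum] at hw
      obtain ⟨g, hg, rfl⟩ := hw
      -- P t holds for each g τ, hence for the sum
      have hPg : ∀ τ ∈ Finset.Icc t T, ∀ X, R t X ⊆ R t (X + g τ) := by
        intro τ hτ
        obtain ⟨htτ, hτT⟩ := Finset.mem_Icc.mp hτ
        have hPτ : ∀ X, R τ X ⊆ R τ (X + g τ) :=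
          hPcompat τ hτT (hcomp τ hτT) (g τ) (hg hτ)
        have : t + (τ - t) = τ := by omega
        exact hPprop (τ - t) t (by omega) (g τ) (by rw [this]; exact hPτ)
      -- sum the P's
      have hPsum : ∀ s : Finset ℕ, s ⊆ Finset.Icc t T →
          ∀ X, R t X ⊆ R t (X + ∑ τ ∈ s, g τ) := by
        intro s
        induction s using Finset.induction_on with
        | empty => intro _ X; simp
        | insert a s' hnot ih =>
          intro hsub X
          have h1 : ∀ X, R t X ⊆ R t (X + g a) :=
            hPg a (hsub (Finset.mem_insert_self a s'))
          have h2 := ih (fun i hi => hsub (Finset.mem_insert_of_mem hi)) X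
          rw [Finset.sum_insert hnot]
          intro u hu
          have := h1 _ (h2 hu)
          have heq : X + (g a + ∑ τ ∈ s', g τ) = X + ∑ τ ∈ s', g τ + g a := by abel
          rwa [heq]
      have : (0 : Lp (Ed d) p μ) ∈ R t (z + ∑ τ ∈ Finset.Icc t T, g τ) :=
        hPsum (Finset.Icc t T) (Finset.Subset.refl _) z hz
      exact this
  · -- backward: sum version implies compatibility
    intro hsum t ht
    apply Set.Subset.antisymm
    · intro Z hZ
      exact ⟨Z, hZ, 0, hS0 t ht, by simp⟩
    · rintro _ ⟨z, hz, w, hw, rfl⟩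
      have hwSum : w ∈ ∑ τ ∈ Finset.Icc t T, S τ := by
        have := Set.finset_sum_mem_finset_sum (Finset.Icc t T) S
          (fun τ => if τ = t then w else 0) (by
            intro i hi
            obtain ⟨-, hiT⟩ := Finset.mem_Icc.mp hi
            by_cases h : i = t
            · subst h; simpa [hS] using hw
            · simpa [h] using hS0 i hiT)
        have heq : (∑ τ ∈ Finset.Icc t T, if τ = t then w else 0) = w := by
          rw [Finset.sum_ite_eq' (Finset.Icc t T) t (fun _ => w)]
          simp [Finset.mem_Icc, ht]
        rwa [heq] at this
      rw [hsum t ht]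
      exact Set.add_mem_add hz hwSum
end
end

section
/- For t ∈ {0,…,T} let A_t, C_t, D_t ⊆ L^p_d(F_T) with A_t = A_{t+1} + D_t for all t < T. Then the following are equivalent: (i) A_t = A_t + C_t for all t; (ii) A_t = A_t + C_s for all t ≤ s; (iii) A_t = A_t + Σ_{τ=t}^{T} C_τ for all t. -/
open Set Pointwise
noncomputable section

private lemma zero_mem_sum_sets {V : Type*} [AddCommGroup V] (C : ℕ → Set V)
    (s : Finset ℕ) (h : ∀ τ ∈ s, (0 : V) ∈ C τ) : (0 : V) ∈ ∑ τ ∈ s, C τ := by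
  classical
  induction s using Finset.induction with
  | empty => simp
  | @insert a s hx ih =>
    rw [Finset.sum_insert hx]
    have := add_mem_add (h a (Finset.mem_insert_self a s))
      (ih fun τ hτ => h τ (Finset.mem_insert_of_mem hτ))
    simpa using this

private lemma absorb_sum_sets {V : Type*} [AddCommGroup V] (X : Set V) (C : ℕ → Set V)
    (s : Finset ℕ) (h : ∀ τ ∈ s, X + C τ = X) : X + ∑ τ ∈ s, C τ = X := by
  classical
  induction s using Finset.induction with
  | empty => simp
  | @insert a s hx ih =>
    rw [Finset.sum_insert hx, ← add_assoc, h a (Finset.mem_insert_self a s)]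
    exact ih fun τ hτ => h τ (Finset.mem_insert_of_mem hτ)

/-- if `A_t = A_{t+1} + D_t` for all `t < T`, then the following are
equivalent: (i) `A_t = A_t + C_t` for all `t`; (ii) `A_t = A_t + C_s` for all `t ≤ s`;
(iii) `A_t = A_t + Σ_{τ=t}^T C_τ` for all `t`. -/
theorem acceptance_absorption_equivalences
    {V : Type*} [AddCommGroup V] (T : ℕ) (A C D : ℕ → Set V)
    (hC0 : ∀ t ≤ T, (0 : V) ∈ C t)
    (hAD : ∀ t, t + 1 ≤ T → A t = A (t + 1) + D t) :
    ((∀ t ≤ T, A t = A t + C t) ↔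
      (∀ t ≤ T, ∀ s, t ≤ s → s ≤ T → A t = A t + C s)) ∧
    ((∀ t ≤ T, A t = A t + C t) ↔
      (∀ t ≤ T, A t = A t + ∑ τ ∈ Finset.Icc t T, C τ)) := by
  classical
  -- chain decomposition
  have hchain : ∀ t s : ℕ, t ≤ s → s ≤ T →
      A t = A s + ∑ τ ∈ Finset.Ico t s, D τ := by
    intro t s hts hsT
    induction s, hts using Nat.le_induction with
    | base => simp
    | succ s hts ih =>
      calc A t = A s + ∑ τ ∈ Finset.Ico t s, D τ := ih (by omega)
        _ = (A (s+1) + D s) + ∑ τ ∈ Finset.Ico t s, D τ := by rw [← hAD s hsT]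
        _ = A (s+1) + (∑ τ ∈ Finset.Ico t s, D τ + D s) := by
            rw [add_assoc, add_comm (D s)]
        _ = A (s+1) + ∑ τ ∈ Finset.Ico t (s+1), D τ := by
            rw [Finset.sum_Ico_succ_top hts]
  -- (i) → (ii)
  have h12 : (∀ t ≤ T, A t = A t + C t) →
      (∀ t ≤ T, ∀ s, t ≤ s → s ≤ T → A t = A t + C s) := by
    intro h t htT s hts hsT
    have hd := hchain t s hts hsT
    calc A t = A s + ∑ τ ∈ Finset.Ico t s, D τ := hd
      _ = (A s + C s) + ∑ τ ∈ Finset.Ico t s, D τ := by rw [← h s hsT]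
      _ = (A s + ∑ τ ∈ Finset.Ico t s, D τ) + C s := by
          rw [add_right_comm]
      _ = A t + C s := by rw [← hd]
  -- (ii) → (i)
  have h21 : (∀ t ≤ T, ∀ s, t ≤ s → s ≤ T → A t = A t + C s) →
      (∀ t ≤ T, A t = A t + C t) := fun h t htT => h t htT t le_rfl htT
  -- (i) → (iii)
  have h13 : (∀ t ≤ T, A t = A t + C t) → (∀ t ≤ T, A t = A t + ∑ τ ∈ Finset.Icc t T, C τ) := by
    intro h t htT
    refine (absorb_sum_sets (A t) C _ ?_).symm
    intro τ hτ
    rw [Finset.mem_Icc] at hτ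
    exact (h12 h t htT τ hτ.1 hτ.2).symm
  -- (iii) → (i)
  have h31 : (∀ t ≤ T, A t = A t + ∑ τ ∈ Finset.Icc t T, C τ) →
      (∀ t ≤ T, A t = A t + C t) := by
    intro h t htT
    apply Subset.antisymm
    · intro x hx
      exact ⟨x, hx, 0, hC0 t htT, (add_zero x)⟩
    · rintro x ⟨a, ha, c, hc, rfl⟩
      rw [h t htT]
      have htmem : t ∈ Finset.Icc t T := Finset.mem_Icc.mpr ⟨le_rfl, htT⟩
      have hcs : c ∈ ∑ τ ∈ Finset.Icc t T, C τ := by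
        rw [← Finset.add_sum_erase _ C htmem]
        have h0 : (0 : V) ∈ ∑ τ ∈ (Finset.Icc t T).erase t, C τ := by
          apply zero_mem_sum_sets
          intro τ hτ
          exact hC0 τ (Finset.mem_Icc.mp (Finset.mem_of_mem_erase hτ)).2
        have := add_mem_add hc h0
        simpa using this
      exact add_mem_add ha hcs
  exact ⟨⟨h12, h21⟩, ⟨h13, fun h t htT => h31 h t htT⟩⟩
end
end
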